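/- Let X be a finite type, let p : X → ℝ → ℝ be a parameterized probability distribution on X (p(x;θ) > 0 for all x, ∑_{x∈X} p(x;θ) = 1 for all θ) with θ ↦ p(x;θ) twice differentiable for each x, and let f : X → ℝ → ℝ with θ ↦ f(x;θ) twice differentiable for each x. Define L(θ) = ∑_{x∈X} p(x;θ) f(x;θ) and g(x;θ) = f(x;θ) ∂_θ log p(x;θ) + ∂_θ f(x;θ). Then the expectation of the surrogate-loss second-order estimator differs from the true second derivative by exactly the expectation of the missing term ∂_θ f · ∂_θ log p: for every θ, L''(θ) − ∑_{x∈X} p(x;θ) · ( g(x;θ) ∂_θ log p(x;θ) + f(x;θ) ∂²_θ log p(x;θ) + ∂²_θ f(x;θ) ) = ∑_{x∈X} p(x;θ) · ∂_θ f(x;θ) · ∂_θ log p(x;θ). -/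

import Mathlib

/-- The surrogate-loss second-order estimator misses exactly the term
`∂_θ f ∂_θ log p`: the true second derivative minus the expectation of the SL
second-order estimator equals the expectation of the missing term. -/
theorem surrogate_loss_second_order_missing_term
    {X : Type*} [Fintype X] (p f g : X → ℝ → ℝ)
    (hp_pos : ∀ x θ, 0 < p x θ)
    (hp_sum : ∀ θ, ∑ x, p x θ = 1)
    (hp_smooth : ∀ x, ContDiff ℝ 2 (p x))
    (hf_smooth : ∀ x, ContDiff ℝ 2 (f x))
    (hg : ∀ x θ, g x θ =
      f x θ * deriv (fun θ => Real.log (p x θ)) θ + deriv (f x) θ) :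
    ∀ θ : ℝ,
      deriv (deriv (fun θ => ∑ x, p x θ * f x θ)) θ -
        ∑ x, p x θ *
          (g x θ * deriv (fun θ => Real.log (p x θ)) θ
            + f x θ * deriv (deriv (fun θ => Real.log (p x θ))) θ
            + deriv (deriv (f x)) θ) =
      ∑ x, p x θ * (deriv (f x) θ * deriv (fun θ => Real.log (p x θ)) θ) := by
  have hpd : ∀ x, Differentiable ℝ (p x) := fun x => (hp_smooth x).differentiable two_ne_zero
  have hfd : ∀ x, Differentiable ℝ (f x) := fun x => (hf_smooth x).differentiable two_ne_zero
  have hp2 : ∀ x, ContDiff ℝ 2 (p x) → ContDiff ℝ 1 (deriv (p x)) := fun x h => by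
    have := (contDiff_succ_iff_deriv.mp (show ContDiff ℝ (1 + 1) (p x) by norm_num [h])).2.2
    exact this
  have hpd2 : ∀ x, Differentiable ℝ (deriv (p x)) := fun x =>
    (hp2 x (hp_smooth x)).differentiable one_ne_zero
  have hfd2 : ∀ x, Differentiable ℝ (deriv (f x)) := fun x => by
    have := (contDiff_succ_iff_deriv.mp
      (show ContDiff ℝ (1 + 1) (f x) by norm_num [hf_smooth x])).2.2
    exact this.differentiable one_ne_zero
  -- first derivative of log p
  have hlog1 : ∀ x, (deriv fun t => Real.log (p x t)) = fun t => deriv (p x) t / p x t := by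
    intro x
    funext t
    exact deriv.log (hpd x t) (hp_pos x t).ne'
  -- second derivative of log p
  have hlog2 : ∀ x t, deriv (deriv fun t => Real.log (p x t)) t =
      (deriv (deriv (p x)) t * p x t - deriv (p x) t * deriv (p x) t) / (p x t) ^ 2 := by
    intro x t
    rw [hlog1 x]
    exact deriv_div (hpd2 x t) (hpd x t) (hp_pos x t).ne'
  -- first derivative of L
  have hL1 : (deriv fun t => ∑ x, p x t * f x t) =
      fun t => ∑ x, (deriv (p x) t * f x t + p x t * deriv (f x) t) := by
    funext t
    rw [deriv_fun_sum (A := fun x t => p x t * f x t) (fun x _ => ((hpd x t).mul (hfd x t)))]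
    exact Finset.sum_congr rfl fun x _ => deriv_mul (hpd x t) (hfd x t)
  intro θ
  have hL2 : deriv (deriv fun t => ∑ x, p x t * f x t) θ =
      ∑ x, (deriv (deriv (p x)) θ * f x θ + deriv (p x) θ * deriv (f x) θ +
        (deriv (p x) θ * deriv (f x) θ + p x θ * deriv (deriv (f x)) θ)) := by
    rw [hL1, deriv_fun_sum (A := fun x t => deriv (p x) t * f x t + p x t * deriv (f x) t) (fun x _ =>
      (((hpd2 x θ).mul (hfd x θ)).add ((hpd x θ).mul (hfd2 x θ))))]
    refine Finset.sum_congr rfl fun x _ => ?_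
    rw [deriv_fun_add ((hpd2 x θ).fun_mul (hfd x θ)) ((hpd x θ).fun_mul (hfd2 x θ)),
      deriv_fun_mul (hpd2 x θ) (hfd x θ), deriv_fun_mul (hpd x θ) (hfd2 x θ)]
  rw [hL2, ← Finset.sum_sub_distrib]
  refine Finset.sum_congr rfl fun x _ => ?_
  rw [hg x θ, hlog2 x θ, hlog1 x]
  have hne : p x θ ≠ 0 := (hp_pos x θ).ne'
  field_simp
  ring
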